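/- Let M and M̂ be simple graphs on the vertex set {1,…,n}, and let v : ℝⁿ → ℝⁿ be a C¹ diffeomorphism. Suppose there is a permutation π of {1,…,n} such that for all i, j: i and j are adjacent in M if and only if π(i) and π(j) are adjacent in M̂. Suppose further that for every ordered pair of distinct indices (k, l) with k and l not adjacent in M̂, and every x ∈ ℝⁿ: (i) (∂v_i/∂x_k)(x) · (∂v_i/∂x_l)(x) = 0 for every index i, and (ii) (∂v_i/∂x_k)(x) · (∂v_j/∂x_l)(x) = 0 for every pair of indices i, j adjacent in M. Then for every ordered pair of distinct indices (k, l) with k and l not adjacent in M̂ and every index i: either ∂v_i/∂x_k vanishes identically on ℝⁿ, or ∂v_i/∂x_l vanishes identically on ℝⁿ. -/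

import Mathlib

/-- The (i,j) entry of the Jacobian of `f` at `x`: the j-th partial derivative
of the i-th component of `f`. -/
noncomputable def pd {n : ℕ} (f : (Fin n → ℝ) → (Fin n → ℝ)) (i j : Fin n)
    (x : Fin n → ℝ) : ℝ :=
  fderiv ℝ f x (Pi.single j 1) i

theorem partials_do_not_switch_support
    {n : ℕ} (M Mhat : SimpleGraph (Fin n))
    (v w : (Fin n → ℝ) → (Fin n → ℝ))
    (hv : ContDiff ℝ 1 v) (hw : ContDiff ℝ 1 w)
    (hleft : Function.LeftInverse w v) (hright : Function.RightInverse w v)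
    (π : Equiv.Perm (Fin n))
    (hiso : ∀ i j : Fin n, M.Adj i j ↔ Mhat.Adj (π i) (π j))
    (h1 : ∀ k l : Fin n, k ≠ l → ¬ Mhat.Adj k l →
      ∀ x : Fin n → ℝ, ∀ i : Fin n, pd v i k x * pd v i l x = 0)
    (h2 : ∀ k l : Fin n, k ≠ l → ¬ Mhat.Adj k l →
      ∀ x : Fin n → ℝ, ∀ i j : Fin n, M.Adj i j → pd v i k x * pd v j l x = 0) :
    ∀ k l : Fin n, k ≠ l → ¬ Mhat.Adj k l → ∀ i : Fin n,
      (∀ x : Fin n → ℝ, pd v i k x = 0) ∨ (∀ x : Fin n → ℝ, pd v i l x = 0) := by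
  classical
  -- continuity of the partial derivatives
  have hcont : ∀ r c : Fin n, Continuous (fun x => pd v r c x) := by
    intro r c
    have h1' : Continuous (fderiv ℝ v) := hv.continuous_fderiv one_ne_zero
    have h2' : Continuous fun x => (fderiv ℝ v x) (Pi.single c 1) :=
      h1'.clm_apply continuous_const
    exact (continuous_apply r).comp h2'
  -- at each point there is a permutation σ with all pd v r (σ r) x ≠ 0
  have hsdr : ∀ x : Fin n → ℝ, ∃ τ : Equiv.Perm (Fin n),
      ∀ r : Fin n, pd v r (τ r) x ≠ 0 := by
    intro x
    have hvd : DifferentiableAt ℝ v x := (hv.differentiable one_ne_zero) x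
    have hwd : DifferentiableAt ℝ w (v x) := (hw.differentiable one_ne_zero) (v x)
    set A := fderiv ℝ v x with hA
    set B := fderiv ℝ w (v x) with hB
    have hBA : B.comp A = ContinuousLinearMap.id ℝ (Fin n → ℝ) := by
      have hc : HasFDerivAt (w ∘ v) (B.comp A) x :=
        hwd.hasFDerivAt.comp x hvd.hasFDerivAt
      have hid : HasFDerivAt (w ∘ v) (ContinuousLinearMap.id ℝ (Fin n → ℝ)) x := by
        have he : (w ∘ v) = id := funext hleft
        rw [he]; exact hasFDerivAt_id x
      exact hc.unique hid
    have hAB : A.comp B = ContinuousLinearMap.id ℝ (Fin n → ℝ) := by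
      have hwvx : w (v x) = x := hleft x
      have hvd' : HasFDerivAt v A (w (v x)) := by
        rw [hwvx]; exact hvd.hasFDerivAt
      have hc : HasFDerivAt (v ∘ w) (A.comp B) (v x) :=
        hvd'.comp (v x) hwd.hasFDerivAt
      have hid : HasFDerivAt (v ∘ w) (ContinuousLinearMap.id ℝ (Fin n → ℝ)) (v x) := by
        have he : (v ∘ w) = id := funext hright
        rw [he]; exact hasFDerivAt_id (v x)
      exact hc.unique hid
    have hcomp1 : (A : (Fin n → ℝ) →ₗ[ℝ] (Fin n → ℝ)) ∘ₗ (B : (Fin n → ℝ) →ₗ[ℝ] (Fin n → ℝ))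
        = LinearMap.id := by
      rw [← ContinuousLinearMap.toLinearMap_comp, hAB]
      exact ContinuousLinearMap.coe_id
    have hcomp2 : (B : (Fin n → ℝ) →ₗ[ℝ] (Fin n → ℝ)) ∘ₗ (A : (Fin n → ℝ) →ₗ[ℝ] (Fin n → ℝ))
        = LinearMap.id := by
      rw [← ContinuousLinearMap.toLinearMap_comp, hBA]
      exact ContinuousLinearMap.coe_id
    set Am := LinearMap.toMatrix' (A : (Fin n → ℝ) →ₗ[ℝ] (Fin n → ℝ)) with hAm
    have hdet : Am.det ≠ 0 := by
      rw [hAm, LinearMap.det_toMatrix']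
      have he : IsUnit (LinearMap.det
          ((LinearEquiv.ofLinear (A : (Fin n → ℝ) →ₗ[ℝ] (Fin n → ℝ))
            (B : (Fin n → ℝ) →ₗ[ℝ] (Fin n → ℝ)) hcomp1 hcomp2 :
            (Fin n → ℝ) ≃ₗ[ℝ] (Fin n → ℝ)) : (Fin n → ℝ) →ₗ[ℝ] (Fin n → ℝ))) :=
        LinearEquiv.isUnit_det' _
      exact he.ne_zero
    have hAme : ∀ r c, Am r c = pd v r c x := by
      intro r c
      rw [hAm, LinearMap.toMatrix'_apply]
      have hfun : (fun j' => if j' = c then (1:ℝ) else 0) = Pi.single c 1 := by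
        funext j'
        simp [Pi.single_apply]
      show (A : (Fin n → ℝ) →ₗ[ℝ] (Fin n → ℝ)) (Pi.single c 1) r
          = pd v r c x
      rfl
    by_contra hno
    push_neg at hno
    apply hdet
    rw [Matrix.det_apply]
    apply Finset.sum_eq_zero
    intro σ _
    obtain ⟨r, hr⟩ := hno σ⁻¹
    have hzero : Am (σ (σ⁻¹ r)) (σ⁻¹ r) = 0 := by
      rw [← Equiv.Perm.mul_apply, mul_inv_cancel, Equiv.Perm.one_apply, hAme]
      exact hr
    have hp : (∏ i, Am (σ i) i) = 0 :=
      Finset.prod_eq_zero (Finset.mem_univ (σ⁻¹ r)) hzero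
    rw [hp, smul_zero]
  -- closed neighborhoods
  set NbM : Fin n → Finset (Fin n) :=
    fun i => insert i (Finset.univ.filter fun j => M.Adj i j) with hNbM
  set NbH : Fin n → Finset (Fin n) :=
    fun s => insert s (Finset.univ.filter fun t => Mhat.Adj s t) with hNbH
  -- the H function
  set H : (Fin n → ℝ) → Fin n → Finset (Fin n) :=
    fun x i => (NbM i).biUnion
      (fun j => Finset.univ.filter fun c => pd v j c x ≠ 0) with hHdef
  -- degrees match via π
  have hdegπ : ∀ i : Fin n, (NbM i).card = (NbH (π i)).card := by
    intro i
    have himg : (NbM i).image π = NbH (π i) := by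
      ext s
      simp only [hNbM, hNbH, Finset.mem_image, Finset.mem_insert, Finset.mem_filter,
        Finset.mem_univ, true_and]
      constructor
      · rintro ⟨j, hj, rfl⟩
        rcases hj with rfl | hj
        · exact Or.inl rfl
        · exact Or.inr ((hiso i j).1 hj)
      · rintro (rfl | hs)
        · exact ⟨i, Or.inl rfl, rfl⟩
        · refine ⟨π.symm s, Or.inr ?_, π.apply_symm_apply s⟩
          have := (hiso i (π.symm s)).2
          rw [π.apply_symm_apply] at this
          exact this hs
    rw [← himg, Finset.card_image_of_injective _ π.injective]
  -- key pointwise structure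
  have key : ∀ x : Fin n → ℝ, ∀ i : Fin n,
      (H x i).card = (NbM i).card ∧
      ∃ τ : Equiv.Perm (Fin n), (∀ r, pd v r (τ r) x ≠ 0) ∧
        H x i = (NbM i).image τ := by
    intro x
    obtain ⟨τ, hτ⟩ := hsdr x
    -- τ is a graph homomorphism
    have hhom : ∀ i j : Fin n, M.Adj i j → Mhat.Adj (τ i) (τ j) := by
      intro i j hij
      by_contra hn
      have hne : τ i ≠ τ j := fun h => hij.ne (τ.injective h)
      have := h2 (τ i) (τ j) hne hn x i j hij
      exact (mul_ne_zero (hτ i) (hτ j)) this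
    have himsub : ∀ i : Fin n, (NbM i).image τ ⊆ NbH (τ i) := by
      intro i s hs
      obtain ⟨j, hj, rfl⟩ := Finset.mem_image.mp hs
      simp only [hNbM, Finset.mem_insert, Finset.mem_filter, Finset.mem_univ, true_and] at hj
      simp only [hNbH, Finset.mem_insert, Finset.mem_filter, Finset.mem_univ, true_and]
      rcases hj with rfl | hj
      · exact Or.inl rfl
      · exact Or.inr (hhom i j hj)
    -- degrees match for τ
    have hle : ∀ i : Fin n, (NbM i).card ≤ (NbH (τ i)).card := by
      intro i
      calc (NbM i).card = ((NbM i).image τ).card :=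
            (Finset.card_image_of_injective _ τ.injective).symm
        _ ≤ (NbH (τ i)).card := Finset.card_le_card (himsub i)
    have hsum : (∑ i, (NbM i).card) = ∑ i, (NbH (τ i)).card := by
      rw [Equiv.sum_comp τ (fun s => (NbH s).card)]
      rw [← Equiv.sum_comp π (fun s => (NbH s).card)]
      exact Finset.sum_congr rfl (fun i _ => hdegπ i)
    have hdeg : ∀ i : Fin n, (NbM i).card = (NbH (τ i)).card := by
      have := (Finset.sum_eq_sum_iff_of_le (fun i _ => hle i)).mp hsum
      exact fun i => this i (Finset.mem_univ i)
    have himeq : ∀ i : Fin n, (NbM i).image τ = NbH (τ i) := by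
      intro i
      apply Finset.eq_of_subset_of_card_le (himsub i)
      rw [Finset.card_image_of_injective _ τ.injective]
      exact (hdeg i).ge
    intro i
    -- H x i ⊆ NbH (τ i)
    have hHsub : H x i ⊆ NbH (τ i) := by
      intro c hc
      simp only [hHdef, Finset.mem_biUnion, Finset.mem_filter, Finset.mem_univ, true_and] at hc
      obtain ⟨j, hj, hcj⟩ := hc
      simp only [hNbM, Finset.mem_insert, Finset.mem_filter, Finset.mem_univ, true_and] at hj
      simp only [hNbH, Finset.mem_insert, Finset.mem_filter, Finset.mem_univ, true_and]
      by_cases hceq : c = τ i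
      · exact Or.inl hceq
      · refine Or.inr ?_
        by_contra hn
        have hn' : ¬ Mhat.Adj c (τ i) := fun h => hn h.symm
        rcases hj with hji | hj
        · rw [hji] at hcj
          have := h1 c (τ i) hceq hn' x i
          exact (mul_ne_zero hcj (hτ i)) this
        · have := h2 c (τ i) hceq hn' x j i hj.symm
          exact (mul_ne_zero hcj (hτ i)) this
    -- image τ (NbM i) ⊆ H x i
    have himH : (NbM i).image τ ⊆ H x i := by
      intro s hs
      obtain ⟨j, hj, rfl⟩ := Finset.mem_image.mp hs
      simp only [hHdef, Finset.mem_biUnion, Finset.mem_filter, Finset.mem_univ, true_and]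
      exact ⟨j, hj, hτ j⟩
    have hHeq : H x i = (NbM i).image τ := by
      apply le_antisymm _ himH
      intro c hc
      have := hHsub hc
      rw [← himeq i] at this
      exact this
    constructor
    · rw [hHeq, Finset.card_image_of_injective _ τ.injective]
    · exact ⟨τ, hτ, hHeq⟩
  -- H is locally constant
  have hlc : IsLocallyConstant (fun x => H x) := by
    rw [IsLocallyConstant.iff_eventually_eq]
    intro x
    have hev : ∀ᶠ y in nhds x, ∀ j c : Fin n, pd v j c x ≠ 0 → pd v j c y ≠ 0 := by
      rw [Filter.eventually_all]
      intro j
      rw [Filter.eventually_all]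
      intro c
      by_cases h : pd v j c x = 0
      · exact Filter.Eventually.of_forall fun y h' => absurd h h'
      · exact ((hcont j c).continuousAt.eventually_ne h).mono fun y hy _ => hy
    refine hev.mono fun y hy => ?_
    funext i
    have hsub : H x i ⊆ H y i := by
      intro c hc
      simp only [hHdef, Finset.mem_biUnion, Finset.mem_filter, Finset.mem_univ, true_and] at hc ⊢
      obtain ⟨j, hj, hcj⟩ := hc
      exact ⟨j, hj, hy j c hcj⟩
    have hcard : (H y i).card ≤ (H x i).card := by
      rw [(key y i).1, (key x i).1]
    exact (Finset.eq_of_subset_of_card_le hsub hcard).symm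
  -- conclusion
  intro k l hkl hnadj i
  by_contra hcon
  push_neg at hcon
  obtain ⟨a, ha⟩ := hcon.1
  obtain ⟨b, hb⟩ := hcon.2
  have hconst : H a = H b := hlc.apply_eq_of_preconnectedSpace a b
  have hk : k ∈ H a i := by
    simp only [hHdef, Finset.mem_biUnion, Finset.mem_filter, Finset.mem_univ, true_and]
    exact ⟨i, by simp [hNbM], ha⟩
  rw [hconst] at hk
  obtain ⟨-, τ, hτ, hHb⟩ := key b i
  rw [hHb] at hk
  obtain ⟨j₁, hj₁, hτj₁⟩ := Finset.mem_image.mp hk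
  simp only [hNbM, Finset.mem_insert, Finset.mem_filter, Finset.mem_univ, true_and] at hj₁
  rcases hj₁ with hji | hj₁
  · rw [hji] at hτj₁
    have hik : pd v i k b ≠ 0 := by rw [← hτj₁]; exact hτ i
    have := h1 k l hkl hnadj b i
    exact (mul_ne_zero hik hb) this
  · have hik : pd v j₁ k b ≠ 0 := by rw [← hτj₁]; exact hτ j₁
    have := h2 k l hkl hnadj b j₁ i hj₁.symm
    exact (mul_ne_zero hik hb) this
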